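/- Suppose the ADMM iterates for the scaled problem P̃ (with ρ̃ = (α/β²)ρ) are initialized by z̃^{(k)} = γ⁻¹z^{(k)} and ỹ^{(k)} = (α/β)y^{(k)}. Then one step of ADMM yields x̃^{(k+1)} = γ⁻¹x^{(k+1)}, z̃^{(k+1)} = γ⁻¹z^{(k+1)}, and ỹ^{(k+1)} = (α/β)y^{(k+1)}, where (x^{(k+1)}, z^{(k+1)}, y^{(k+1)}) are the iterates of ADMM for the original problem P. -/

import Mathlib

open Matrix BigOperators

/-- Convex subdifferential of `f` at `x` (w.r.t. the dot product on `Fin n → ℝ`). -/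
def subdiff {n : ℕ} (f : (Fin n → ℝ) → ℝ) (x : Fin n → ℝ) : Set (Fin n → ℝ) :=
  {v | ∀ y, f x + v ⬝ᵥ (y - x) ≤ f y}

/-- Augmented Lagrangian for `min f(x) + g(z)  s.t.  A x + B z = c`. -/
noncomputable def augL {n m p : ℕ} (f : (Fin n → ℝ) → ℝ) (g : (Fin m → ℝ) → ℝ)
    (A : Matrix (Fin p) (Fin n) ℝ) (B : Matrix (Fin p) (Fin m) ℝ) (c : Fin p → ℝ)
    (ρ : ℝ) (x : Fin n → ℝ) (z : Fin m → ℝ) (y : Fin p → ℝ) : ℝ :=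
  f x + g z + y ⬝ᵥ (A *ᵥ x + B *ᵥ z - c) + (ρ / 2) * ∑ i, (A *ᵥ x + B *ᵥ z - c) i ^ 2


lemma augL_scale {n m p : ℕ} (f : (Fin n → ℝ) → ℝ) (g : (Fin m → ℝ) → ℝ)
    (A : Matrix (Fin p) (Fin n) ℝ) (B : Matrix (Fin p) (Fin m) ℝ) (c : Fin p → ℝ)
    (α β γ ρ : ℝ) (hβ : β ≠ 0) (x : Fin n → ℝ) (z : Fin m → ℝ) (y : Fin p → ℝ) :
    augL (fun x => α * f (γ • x)) (fun z => α * g (γ • z))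
        ((β * γ) • A) ((β * γ) • B) (β • c) ((α / β ^ 2) * ρ) x z ((α / β) • y)
      = α * augL f g A B c ρ (γ • x) (γ • z) y := by
  have hv : ((β * γ) • A) *ᵥ x + ((β * γ) • B) *ᵥ z - β • c
      = β • (A *ᵥ (γ • x) + B *ᵥ (γ • z) - c) := by
    simp [smul_mulVec, mulVec_smul, mul_smul, smul_add, smul_sub]
  simp only [augL, hv]
  have h1 : ((α / β) • y) ⬝ᵥ (β • (A *ᵥ (γ • x) + B *ᵥ (γ • z) - c))
      = α * (y ⬝ᵥ (A *ᵥ (γ • x) + B *ᵥ (γ • z) - c)) := by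
    rw [smul_dotProduct, dotProduct_smul]
    simp only [smul_eq_mul]
    field_simp
  have h2 : ∑ i, (β • (A *ᵥ (γ • x) + B *ᵥ (γ • z) - c)) i ^ 2
      = β ^ 2 * ∑ i, (A *ᵥ (γ • x) + B *ᵥ (γ • z) - c) i ^ 2 := by
    rw [Finset.mul_sum]
    refine Finset.sum_congr rfl fun i _ => ?_
    simp [Pi.smul_apply]; ring
  rw [h1, h2]
  field_simp

/-- One ADMM step for the scaled problem `P̃` (with `ρ̃ = (α/β²)ρ`), started from
`z̃ = γ⁻¹z⁰`, `ỹ = (α/β)y⁰`, produces `x̃¹ = γ⁻¹x¹`, `z̃¹ = γ⁻¹z¹`,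
`ỹ¹ = (α/β)y¹`, where `(x¹, z¹, y¹)` is the ADMM step for `P`. -/
theorem admm_iterate_scaling {n m p : ℕ}
    (f : (Fin n → ℝ) → ℝ) (g : (Fin m → ℝ) → ℝ)
    (A : Matrix (Fin p) (Fin n) ℝ) (B : Matrix (Fin p) (Fin m) ℝ) (c : Fin p → ℝ)
    (α β γ ρ : ℝ) (hα : 0 < α) (hβ : 0 < β) (hγ : 0 < γ) (hρ : 0 < ρ)
    (hf : ConvexOn ℝ Set.univ f) (hg : ConvexOn ℝ Set.univ g)
    (z0 : Fin m → ℝ) (y0 : Fin p → ℝ)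
    (x1 : Fin n → ℝ) (z1 : Fin m → ℝ) (y1 : Fin p → ℝ)
    -- original ADMM step, with unique minimizers
    (hx1 : ∀ x, augL f g A B c ρ x1 z0 y0 ≤ augL f g A B c ρ x z0 y0)
    (hx1u : ∀ x', (∀ x, augL f g A B c ρ x' z0 y0 ≤ augL f g A B c ρ x z0 y0) → x' = x1)
    (hz1 : ∀ z, augL f g A B c ρ x1 z1 y0 ≤ augL f g A B c ρ x1 z y0)
    (hz1u : ∀ z', (∀ z, augL f g A B c ρ x1 z' y0 ≤ augL f g A B c ρ x1 z y0) → z' = z1)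
    (hy1 : y1 = y0 + ρ • (A *ᵥ x1 + B *ᵥ z1 - c))
    -- scaled ADMM step
    (xt1 : Fin n → ℝ) (zt1 : Fin m → ℝ) (yt1 : Fin p → ℝ)
    (hxt1 : ∀ x, augL (fun x => α * f (γ • x)) (fun z => α * g (γ • z))
        ((β * γ) • A) ((β * γ) • B) (β • c) ((α / β ^ 2) * ρ)
        xt1 (γ⁻¹ • z0) ((α / β) • y0) ≤
      augL (fun x => α * f (γ • x)) (fun z => α * g (γ • z))
        ((β * γ) • A) ((β * γ) • B) (β • c) ((α / β ^ 2) * ρ)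
        x (γ⁻¹ • z0) ((α / β) • y0))
    (hzt1 : ∀ z, augL (fun x => α * f (γ • x)) (fun z => α * g (γ • z))
        ((β * γ) • A) ((β * γ) • B) (β • c) ((α / β ^ 2) * ρ)
        xt1 zt1 ((α / β) • y0) ≤
      augL (fun x => α * f (γ • x)) (fun z => α * g (γ • z))
        ((β * γ) • A) ((β * γ) • B) (β • c) ((α / β ^ 2) * ρ)
        xt1 z ((α / β) • y0))
    (hyt1 : yt1 = (α / β) • y0 + ((α / β ^ 2) * ρ) •
        (((β * γ) • A) *ᵥ xt1 + ((β * γ) • B) *ᵥ zt1 - β • c)) :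
    xt1 = γ⁻¹ • x1 ∧ zt1 = γ⁻¹ • z1 ∧ yt1 = (α / β) • y1 := by
  have hβ' : β ≠ 0 := ne_of_gt hβ
  have hγ' : γ ≠ 0 := ne_of_gt hγ
  have hzz : γ • (γ⁻¹ • z0) = z0 := by
    rw [smul_smul, mul_inv_cancel₀ hγ', one_smul]
  -- x-update
  have hxmin : ∀ x, augL f g A B c ρ (γ • xt1) z0 y0 ≤ augL f g A B c ρ x z0 y0 := by
    intro x
    have h := hxt1 (γ⁻¹ • x)
    rw [augL_scale f g A B c α β γ ρ hβ', augL_scale f g A B c α β γ ρ hβ', hzz,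
      smul_smul, mul_inv_cancel₀ hγ', one_smul] at h
    exact le_of_mul_le_mul_left (by linarith) hα
  have hx : γ • xt1 = x1 := hx1u _ hxmin
  have hxt : xt1 = γ⁻¹ • x1 := by
    rw [← hx, smul_smul, inv_mul_cancel₀ hγ', one_smul]
  -- z-update
  have hzmin : ∀ z, augL f g A B c ρ x1 (γ • zt1) y0 ≤ augL f g A B c ρ x1 z y0 := by
    intro z
    have h := hzt1 (γ⁻¹ • z)
    rw [augL_scale f g A B c α β γ ρ hβ', augL_scale f g A B c α β γ ρ hβ',
      show γ • γ⁻¹ • z = z from by rw [smul_smul, mul_inv_cancel₀ hγ', one_smul], hx] at h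
    exact le_of_mul_le_mul_left (by linarith) hα
  have hz : γ • zt1 = z1 := hz1u _ hzmin
  have hzt : zt1 = γ⁻¹ • z1 := by
    rw [← hz, smul_smul, inv_mul_cancel₀ hγ', one_smul]
  refine ⟨hxt, hzt, ?_⟩
  -- y-update
  have hv : ((β * γ) • A) *ᵥ xt1 + ((β * γ) • B) *ᵥ zt1 - β • c
      = β • (A *ᵥ x1 + B *ᵥ z1 - c) := by
    rw [hxt, hzt]
    simp only [smul_mulVec, mulVec_smul, smul_sub, smul_add, smul_smul]
    rw [show γ⁻¹ * (β * γ) = β by field_simp]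
  rw [hyt1, hy1, hv, smul_smul, smul_add, smul_smul]
  congr 2
  field_simp
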